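/- Let g_A ∈ (0,1) and u₁ ≥ 0. Let π_A, π_B : [0,∞) → [0,1] be differentiable solutions of the joint AA1 continuous-time dynamics dπ_A/dt = F_A(π_A, π_B) − π_A, dπ_B/dt = F_B(π_A, π_B) − π_B with π_A(0) ≥ π_B(0), where F_A, F_B are the AA1 one-step maps, and suppose π_A(t) ≥ π_B(t) for all t ≥ 0. Then π_B solves the UN continuous-time dynamics dπ/dt = f(π) − π, and the per-time-step utilities satisfy U_t(UN) − U_t(AA1) = g_A·u₁·(π_A(t) − π_B(t)) ≥ 0 for all t ≥ 0, where U_t(UN) = u₁·(g_A·π_A(t) + (1−g_A)·π_B(t)) and U_t(AA1) = u₁·π_B(t). In particular, imposing AA1 never yields more utility than UN at any time. -/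
import Mathlib

open Filter Set Topology

/-- from Theorem: AA1 never beats UN pointwise in time.
Under the joint AA1 continuous-time dynamics with group A advantaged at all times, the
disadvantaged group `π_B` solves the UN continuous-time dynamics `dπ/dt = f(π) − π`,
and the per-time-step utilities satisfy
`U_t(UN) − U_t(AA1) = g_A·u₁·(π_A(t) − π_B(t)) ≥ 0` for all `t ≥ 0`, where
`U_t(UN) = u₁·(g_A·π_A(t) + (1-g_A)·π_B(t))` and `U_t(AA1) = u₁·π_B(t)`. -/
theorem AA1_no_utility_gain
    (f₀ f₁ : ℝ → ℝ → ℝ) (gA u₁ : ℝ)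
    (hgA : gA ∈ Set.Ioo (0:ℝ) 1) (hu1 : 0 ≤ u₁)
    (f : ℝ → ℝ) (hf : ∀ π, f π = π * f₁ 0 π + (1 - π) * f₀ 0 π)
    (FA FB : ℝ → ℝ → ℝ)
    (hFA : ∀ π π', FA π π' = π * f₁ 0 π' + (1 - π) * f₀ 0 π')
    (hFB : ∀ π π', FB π π' = π' * f₁ 0 π' + (1 - π') * f₀ 0 π')
    (πA πB : ℝ → ℝ)
    (hmemA : ∀ t : ℝ, 0 ≤ t → πA t ∈ Set.Icc (0:ℝ) 1)
    (hmemB : ∀ t : ℝ, 0 ≤ t → πB t ∈ Set.Icc (0:ℝ) 1)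
    (hodeA : ∀ t : ℝ, 0 ≤ t →
        HasDerivWithinAt πA (FA (πA t) (πB t) - πA t) (Set.Ici 0) t)
    (hodeB : ∀ t : ℝ, 0 ≤ t →
        HasDerivWithinAt πB (FB (πA t) (πB t) - πB t) (Set.Ici 0) t)
    (horder : ∀ t : ℝ, 0 ≤ t → πB t ≤ πA t) :
    -- π_B solves the UN continuous-time dynamics
    (∀ t : ℝ, 0 ≤ t → HasDerivWithinAt πB (f (πB t) - πB t) (Set.Ici 0) t) ∧
    -- and UN yields at least as much utility as AA1 at every time
    (∀ t : ℝ, 0 ≤ t →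
      u₁ * (gA * πA t + (1 - gA) * πB t) - u₁ * πB t = gA * u₁ * (πA t - πB t) ∧
      0 ≤ gA * u₁ * (πA t - πB t)) := by
  constructor
  · intro t ht
    have := hodeB t ht
    rwa [hFB, ← hf] at this
  · intro t ht
    refine ⟨by ring, ?_⟩
    exact mul_nonneg (mul_nonneg hgA.1.le hu1) (sub_nonneg.2 (horder t ht))
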